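/- arXiv:2402.03107 — 2 statements merged into one kernel-verified Lean document; each statement's English description precedes it below -/
import Mathlib

section
/- Let G be any subgroup of the symmetric group S_k. Then for every n, the set S_n(S_k \ G) of permutations in S_n avoiding every pattern in the complement of G in S_k is (the underlying set of) a subgroup of S_n; that is, it contains the identity and is closed under composition and inverses. -/
/-- A permutation `π ∈ S_n` contains the pattern `τ ∈ S_k` if there is a strictly
increasing `f : Fin k → Fin n` such that `τ a < τ b ↔ π (f a) < π (f b)`. -/
def PermContains {k n : ℕ} (τ : Equiv.Perm (Fin k)) (π : Equiv.Perm (Fin n)) : Prop :=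
  ∃ f : Fin k → Fin n, StrictMono f ∧ ∀ a b : Fin k, τ a < τ b ↔ π (f a) < π (f b)

/-- `avoidSet n T` is `S_n(T)`: the permutations of `Fin n` avoiding every pattern in `T`,
where `T` is a set of permutations of arbitrary lengths. -/
def avoidSet (n : ℕ) (T : Set (Σ k : ℕ, Equiv.Perm (Fin k))) : Set (Equiv.Perm (Fin n)) :=
  {π | ∀ τ ∈ T, ¬ PermContains τ.2 π}

set_option linter.deprecated false in
/-- A strictly monotone permutation of `Fin k` is the identity. -/
lemma strictMono_perm_eq_one {k : ℕ} (τ : Equiv.Perm (Fin k)) (h : StrictMono τ) : τ = 1 := by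
  have : (τ : Fin k → Fin k) = id := by
    apply (h.range_inj strictMono_id).1
    simp [τ.surjective.range_eq, Set.range_id]
  ext x
  simp [show (τ : Fin k → Fin k) = id from this]

/-- If `π⁻¹` contains `τ`, then `π` contains `τ⁻¹`. -/
lemma permContains_inv {k n : ℕ} {τ : Equiv.Perm (Fin k)} {π : Equiv.Perm (Fin n)}
    (h : PermContains τ π⁻¹) : PermContains τ⁻¹ π := by
  obtain ⟨f, hf, hpat⟩ := h
  refine ⟨fun a => π⁻¹ (f (τ⁻¹ a)), ?_, ?_⟩
  · intro a b hab
    rw [show (π⁻¹ : Equiv.Perm (Fin n)) (f (τ⁻¹ a)) < π⁻¹ (f (τ⁻¹ b)) ↔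
        τ (τ⁻¹ a) < τ (τ⁻¹ b) from (hpat _ _).symm]
    simpa using hab
  · intro a b
    simp only [Equiv.Perm.inv_def, Equiv.apply_symm_apply]
    exact (hf.lt_iff_lt).symm

/-- If `π * σ` contains `τ`, then `τ = τ₁ * τ₂` where `π` contains `τ₁` and `σ` contains `τ₂`. -/
lemma permContains_mul {k n : ℕ} {τ : Equiv.Perm (Fin k)} {π σ : Equiv.Perm (Fin n)}
    (h : PermContains τ (π * σ)) :
    ∃ τ₁ τ₂ : Equiv.Perm (Fin k), τ = τ₁ * τ₂ ∧ PermContains τ₁ π ∧ PermContains τ₂ σ := by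
  obtain ⟨f, hf, hpat⟩ := h
  have hinjσf : Function.Injective (fun a : Fin k => σ (f a)) :=
    σ.injective.comp hf.injective
  set s : Finset (Fin n) := Finset.image (fun a : Fin k => σ (f a)) Finset.univ with hs
  have hcard : s.card = k := by
    rw [hs, Finset.card_image_of_injective _ hinjσf, Finset.card_univ, Fintype.card_fin]
  set g : Fin k ↪o Fin n := s.orderEmbOfFin hcard with hg
  -- τ₂ sends a to the rank of σ (f a) in s
  have hmem : ∀ a : Fin k, σ (f a) ∈ s := by
    intro a; rw [hs]; exact Finset.mem_image_of_mem _ (Finset.mem_univ a)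
  set t : Fin k → Fin k := fun a => (s.orderIsoOfFin hcard).symm ⟨σ (f a), hmem a⟩ with ht
  have hgt : ∀ a, g (t a) = σ (f a) := by
    intro a
    rw [ht, hg, ← Finset.coe_orderIsoOfFin_apply]
    simp
  have htinj : Function.Injective t := by
    intro a b hab
    apply hinjσf
    have := congrArg g hab
    rwa [hgt, hgt] at this
  have htbij : Function.Bijective t := Finite.injective_iff_bijective.1 htinj
  set τ₂ : Equiv.Perm (Fin k) := Equiv.ofBijective t htbij with hτ₂
  have hτ₂app : ∀ a, τ₂ a = t a := fun a => rfl
  refine ⟨τ * τ₂⁻¹, τ₂, by group, ?_, ?_⟩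
  · refine ⟨g, g.strictMono, ?_⟩
    intro a b
    obtain ⟨a', ha'⟩ := τ₂.surjective a
    obtain ⟨b', hb'⟩ := τ₂.surjective b
    subst ha'; subst hb'
    simp only [Equiv.Perm.mul_apply, Equiv.Perm.inv_def, Equiv.symm_apply_apply]
    rw [hτ₂app, hτ₂app, hgt, hgt]
    simpa using hpat a' b'
  · refine ⟨f, hf, ?_⟩
    intro a b
    rw [hτ₂app, hτ₂app, ← g.lt_iff_lt, hgt, hgt]

theorem avoid_compl_subgroup_is_subgroup (k n : ℕ) (G : Subgroup (Equiv.Perm (Fin k))) :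
    ∃ H : Subgroup (Equiv.Perm (Fin n)),
      (H : Set (Equiv.Perm (Fin n))) =
        avoidSet n ((fun τ => (⟨k, τ⟩ : Σ k : ℕ, Equiv.Perm (Fin k))) ''
          (↑G : Set (Equiv.Perm (Fin k)))ᶜ) := by
  set T := ((fun τ => (⟨k, τ⟩ : Σ k : ℕ, Equiv.Perm (Fin k))) ''
    (↑G : Set (Equiv.Perm (Fin k)))ᶜ) with hT
  have hmemiff : ∀ π : Equiv.Perm (Fin n),
      π ∈ avoidSet n T ↔ ∀ τ : Equiv.Perm (Fin k), τ ∉ G → ¬ PermContains τ π := by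
    intro π
    constructor
    · intro h τ hτ
      exact h ⟨k, τ⟩ ⟨τ, hτ, rfl⟩
    · rintro h ⟨k', τ⟩ ⟨τ', hτ', heq⟩
      cases heq
      exact h τ' hτ'
  have hone : (1 : Equiv.Perm (Fin n)) ∈ avoidSet n T := by
    rw [hmemiff]
    rintro τ hτ ⟨f, hf, hpat⟩
    apply hτ
    have : StrictMono τ := by
      intro a b hab
      rw [hpat]
      simpa using hf hab
    rw [strictMono_perm_eq_one τ this]
    exact G.one_mem
  have hmul : ∀ π σ : Equiv.Perm (Fin n), π ∈ avoidSet n T → σ ∈ avoidSet n T →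
      π * σ ∈ avoidSet n T := by
    intro π σ hπ hσ
    rw [hmemiff] at *
    intro τ hτ hcont
    obtain ⟨τ₁, τ₂, heq, h₁, h₂⟩ := permContains_mul hcont
    by_cases hτ₁ : τ₁ ∈ G
    · by_cases hτ₂ : τ₂ ∈ G
      · exact hτ (heq ▸ G.mul_mem hτ₁ hτ₂)
      · exact hσ τ₂ hτ₂ h₂
    · exact hπ τ₁ hτ₁ h₁
  have hinv : ∀ π : Equiv.Perm (Fin n), π ∈ avoidSet n T → π⁻¹ ∈ avoidSet n T := by
    intro π hπ
    rw [hmemiff] at *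
    intro τ hτ hcont
    exact hπ τ⁻¹ (fun hm => hτ (by simpa using G.inv_mem hm)) (permContains_inv hcont)
  exact ⟨{ carrier := avoidSet n T
           one_mem' := hone
           mul_mem' := fun {a b} ha hb => hmul a b ha hb
           inv_mem' := fun {a} ha => hinv a ha }, rfl⟩
end

section
/- Let T ⊆ S_3 with |T| = 3. Suppose that {123, 321} is not contained in T, that T ≠ {132, 213, 321}, and that T ≠ {123, 231, 312}. Then ⟨S_n(T)⟩ = S_n for every n. -/
def p123 : Equiv.Perm (Fin 3) := 1
def p132 : Equiv.Perm (Fin 3) := Equiv.swap 1 2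
def p213 : Equiv.Perm (Fin 3) := Equiv.swap 0 1
def p231 : Equiv.Perm (Fin 3) := finRotate 3
def p312 : Equiv.Perm (Fin 3) := (finRotate 3)⁻¹
def p321 : Equiv.Perm (Fin 3) := Equiv.swap 0 2

open Equiv Equiv.Perm

lemma mem_avoidSet {n : ℕ} {π : Equiv.Perm (Fin n)} {S : Finset (Equiv.Perm (Fin 3))} :
    π ∈ avoidSet n ((fun τ => (⟨3, τ⟩ : Σ k : ℕ, Equiv.Perm (Fin k))) '' (↑S : Set (Equiv.Perm (Fin 3)))) ↔
      ∀ τ ∈ S, ¬ PermContains τ π := by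
  constructor
  · intro h τ hτ
    exact h ⟨3, τ⟩ ⟨τ, by simpa using hτ, rfl⟩
  · rintro h τ ⟨σ, hσ, rfl⟩
    exact h σ (by simpa using hσ)

lemma revPerm_mul_revPerm {n : ℕ} : (Fin.revPerm * Fin.revPerm : Equiv.Perm (Fin n)) = 1 := by
  ext x
  simp [Equiv.Perm.mul_apply]

lemma contains_rev {k n : ℕ} {τ : Equiv.Perm (Fin k)} {π : Equiv.Perm (Fin n)}
    (h : PermContains τ π) : PermContains (Fin.revPerm * τ) (Fin.revPerm * π) := by
  obtain ⟨f, hf, h⟩ := h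
  exact ⟨f, hf, fun a b => by
    simp only [Equiv.Perm.mul_apply, Fin.revPerm_apply, Fin.rev_lt_rev]
    exact h b a⟩

lemma avoids_mul_rev {n : ℕ} (τ τ' : Equiv.Perm (Fin 3)) (hττ' : Fin.revPerm * τ' = τ)
    (s : Equiv.Perm (Fin n)) (h : ¬ PermContains τ' s) :
    ¬ PermContains τ (Fin.revPerm * s) := by
  intro hc
  apply h
  have h2 := contains_rev hc
  have e1 : Fin.revPerm * τ = τ' := by
    rw [← hττ', ← mul_assoc, revPerm_mul_revPerm, one_mul]
  rwa [e1, ← mul_assoc, revPerm_mul_revPerm, one_mul] at h2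

lemma rev_avoids {n : ℕ} (τ : Equiv.Perm (Fin 3)) (a b : Fin 3) (hab : a < b) (hτ : τ a < τ b) :
    ¬ PermContains τ (Fin.revPerm : Equiv.Perm (Fin n)) := by
  rintro ⟨f, hf, h⟩
  have h2 := (h a b).mp hτ
  simp only [Fin.revPerm_apply, Fin.rev_lt_rev] at h2
  exact absurd h2 (asymm (hf hab))

lemma swap_val_eq {n : ℕ} (i j x : Fin n) : ((Equiv.swap i j x : Fin n) : ℕ)
    = if (x:ℕ) = (i:ℕ) then (j:ℕ) else if (x:ℕ) = (j:ℕ) then (i:ℕ) else (x:ℕ) := by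
  rcases eq_or_ne x i with rfl | h1
  · rw [Equiv.swap_apply_left, if_pos rfl]
  · rw [if_neg (fun hh => h1 (Fin.ext hh))]
    rcases eq_or_ne x j with rfl | h2
    · rw [Equiv.swap_apply_right, if_pos rfl]
    · rw [Equiv.swap_apply_of_ne_of_ne h1 h2, if_neg (fun hh => h2 (Fin.ext hh))]

lemma swap_inv_unique {n : ℕ} {i j a b : Fin n} (hij : (i : ℕ) + 1 = j) (hab : a < b)
    (h : Equiv.swap i j b < Equiv.swap i j a) : a = i ∧ b = j := by
  rw [Fin.lt_def, swap_val_eq, swap_val_eq] at h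
  rw [Fin.lt_def] at hab
  constructor <;> rw [Fin.ext_iff] <;> split_ifs at h <;> omega

-- swap avoidance lemmas
lemma swap_avoids_231 {n : ℕ} {i j : Fin n} (hij : (i : ℕ) + 1 = j) :
    ¬ PermContains p231 (Equiv.swap i j) := by
  rintro ⟨f, hf, h⟩
  have h02 := swap_inv_unique hij (hf (by decide : (0:Fin 3) < 2)) ((h 2 0).mp (by decide))
  have h12 := swap_inv_unique hij (hf (by decide : (1:Fin 3) < 2)) ((h 2 1).mp (by decide))
  exact absurd (h02.1.trans h12.1.symm) (ne_of_lt (hf (by decide : (0:Fin 3) < 1)))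

lemma swap_avoids_312 {n : ℕ} {i j : Fin n} (hij : (i : ℕ) + 1 = j) :
    ¬ PermContains p312 (Equiv.swap i j) := by
  rintro ⟨f, hf, h⟩
  have h01 := swap_inv_unique hij (hf (by decide : (0:Fin 3) < 1)) ((h 1 0).mp (by decide))
  have h02 := swap_inv_unique hij (hf (by decide : (0:Fin 3) < 2)) ((h 2 0).mp (by decide))
  exact absurd (h01.2.trans h02.2.symm) (ne_of_lt (hf (by decide : (1:Fin 3) < 2)))

lemma swap_avoids_321 {n : ℕ} {i j : Fin n} (hij : (i : ℕ) + 1 = j) :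
    ¬ PermContains p321 (Equiv.swap i j) := by
  rintro ⟨f, hf, h⟩
  have h01 := swap_inv_unique hij (hf (by decide : (0:Fin 3) < 1)) ((h 1 0).mp (by decide))
  have h12 := swap_inv_unique hij (hf (by decide : (1:Fin 3) < 2)) ((h 2 1).mp (by decide))
  have : i = j := h12.1.symm.trans h01.2
  rw [Fin.ext_iff] at this
  omega

lemma swap_avoids_132 {n : ℕ} {i j : Fin n} (hij : (i : ℕ) + 1 = j) (hi0 : (i : ℕ) = 0) :
    ¬ PermContains p132 (Equiv.swap i j) := by
  rintro ⟨f, hf, h⟩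
  have h12 := swap_inv_unique hij (hf (by decide : (1:Fin 3) < 2)) ((h 2 1).mp (by decide))
  have : f 0 < f 1 := hf (by decide)
  rw [h12.1, Fin.lt_def, hi0] at this
  omega

lemma swap_avoids_213 {n : ℕ} {i j : Fin n} (hij : (i : ℕ) + 1 = j) (hjn : (j : ℕ) = n - 1) :
    ¬ PermContains p213 (Equiv.swap i j) := by
  rintro ⟨f, hf, h⟩
  have h01 := swap_inv_unique hij (hf (by decide : (0:Fin 3) < 1)) ((h 1 0).mp (by decide))
  have h2 : f 1 < f 2 := hf (by decide)
  rw [h01.2, Fin.lt_def, hjn] at h2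
  have := (f 2).isLt
  omega

-- finRotate facts
lemma rot_lt_rot {m : ℕ} {a b : Fin (m+1)} (hab : a < b) (hb : b ≠ Fin.last m) :
    finRotate (m+1) a < finRotate (m+1) b := by
  simp only [finRotate_succ_apply]
  have hb' : b < Fin.last m := lt_of_le_of_ne (Fin.le_last b) hb
  have ha' : a < Fin.last m := lt_trans hab hb'
  rw [Fin.lt_def, Fin.val_add_one_of_lt ha', Fin.val_add_one_of_lt hb']
  rw [Fin.lt_def] at hab
  omega

lemma rot_last_lt {m : ℕ} {a : Fin (m+1)} (ha : a ≠ Fin.last m) :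
    finRotate (m+1) (Fin.last m) < finRotate (m+1) a := by
  simp only [finRotate_succ_apply, Fin.last_add_one]
  have ha' : a < Fin.last m := lt_of_le_of_ne (Fin.le_last a) ha
  rw [Fin.lt_def, Fin.val_add_one_of_lt ha']
  simp

lemma rot_avoids_desc01 {m : ℕ} (τ : Equiv.Perm (Fin 3)) (hτ : τ 1 < τ 0) :
    ¬ PermContains τ (finRotate (m+1)) := by
  rintro ⟨f, hf, h⟩
  have h2 := (h 1 0).mp hτ
  have hne : f 1 ≠ Fin.last m := ne_of_lt (lt_of_lt_of_le (hf (by decide : (1:Fin 3) < 2)) (Fin.le_last _))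
  exact absurd (rot_lt_rot (hf (by decide : (0:Fin 3) < 1)) hne) (asymm h2)

lemma rot_avoids_132 {m : ℕ} : ¬ PermContains p132 (finRotate (m+1)) := by
  rintro ⟨f, hf, h⟩
  have h21 := (h 2 1).mp (by decide)
  rcases eq_or_ne (f 2) (Fin.last m) with hl | hl
  · have h02 := (h 0 2).mp (by decide)
    have : f 0 ≠ Fin.last m := ne_of_lt (hl ▸ hf (by decide : (0:Fin 3) < 2))
    rw [hl] at h02
    exact absurd (rot_last_lt this) (asymm h02)
  · exact absurd (rot_lt_rot (hf (by decide : (1:Fin 3) < 2)) hl) (asymm h21)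

-- finRotate inverse facts
lemma rotinv_lt {m : ℕ} {a b : Fin (m+1)} (h0 : a ≠ 0) (hab : a < b) :
    (finRotate (m+1))⁻¹ a < (finRotate (m+1))⁻¹ b := by
  set a' := (finRotate (m+1))⁻¹ a with ha'
  set b' := (finRotate (m+1))⁻¹ b with hb'
  have haa : finRotate (m+1) a' = a := Equiv.apply_symm_apply _ a
  have hbb : finRotate (m+1) b' = b := Equiv.apply_symm_apply _ b
  have ha'l : a' ≠ Fin.last m := by
    intro hh; rw [hh] at haa; simp only [finRotate_succ_apply, Fin.last_add_one] at haa
    exact h0 haa.symm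
  have hb'l : b' ≠ Fin.last m := by
    intro hh; rw [hh] at hbb; simp only [finRotate_succ_apply, Fin.last_add_one] at hbb
    have : a < (0 : Fin (m+1)) := hbb ▸ hab
    exact absurd this (by simp [Fin.lt_def])
  have ha2 : (a:ℕ) = (a':ℕ) + 1 := by
    rw [← haa]; simp only [finRotate_succ_apply]
    rw [Fin.val_add_one_of_lt (lt_of_le_of_ne (Fin.le_last a') ha'l)]
  have hb2 : (b:ℕ) = (b':ℕ) + 1 := by
    rw [← hbb]; simp only [finRotate_succ_apply]
    rw [Fin.val_add_one_of_lt (lt_of_le_of_ne (Fin.le_last b') hb'l)]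
  rw [Fin.lt_def] at hab ⊢
  omega

lemma rotinv_lt_zero {m : ℕ} {a : Fin (m+1)} (h0 : a ≠ 0) :
    (finRotate (m+1))⁻¹ a < (finRotate (m+1))⁻¹ 0 := by
  have hz : (finRotate (m+1))⁻¹ 0 = Fin.last m := by
    apply (finRotate (m+1)).injective
    simp only [Equiv.Perm.coe_inv, Equiv.apply_symm_apply, finRotate_succ_apply, Fin.last_add_one]
  set a' := (finRotate (m+1))⁻¹ a with ha'
  have haa : finRotate (m+1) a' = a := Equiv.apply_symm_apply _ a
  have ha'l : a' ≠ Fin.last m := by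
    intro hh; rw [hh] at haa; simp only [finRotate_succ_apply, Fin.last_add_one] at haa
    exact h0 haa.symm
  rw [hz]
  exact lt_of_le_of_ne (Fin.le_last a') ha'l

lemma rotinv_avoids_desc12 {m : ℕ} (τ : Equiv.Perm (Fin 3)) (hτ : τ 2 < τ 1) :
    ¬ PermContains τ ((finRotate (m+1))⁻¹) := by
  rintro ⟨f, hf, h⟩
  have h2 := (h 2 1).mp hτ
  have hne : f 1 ≠ 0 := by
    have := hf (by decide : (0:Fin 3) < 1)
    intro hh; rw [hh] at this; exact absurd this (by simp [Fin.lt_def])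
  exact absurd (rotinv_lt hne (hf (by decide : (1:Fin 3) < 2))) (asymm h2)

lemma rotinv_avoids_213 {m : ℕ} : ¬ PermContains p213 ((finRotate (m+1))⁻¹) := by
  rintro ⟨f, hf, h⟩
  have h10 := (h 1 0).mp (by decide)
  have h02 := (h 0 2).mp (by decide)
  rcases eq_or_ne (f 0) 0 with hz | hz
  · have hne : f 2 ≠ 0 := by
      have : f 0 < f 2 := hf (by decide)
      intro hh; rw [hh, hz] at this; exact lt_irrefl _ this
    rw [hz] at h02
    exact absurd (rotinv_lt_zero hne) (asymm h02)
  · exact absurd (rotinv_lt hz (hf (by decide : (0:Fin 3) < 1))) (asymm h10)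

-- generation lemmas
lemma top_of_rot_swap {m : ℕ} (H : Subgroup (Equiv.Perm (Fin (m+2)))) (x : Fin (m+2))
    (h1 : finRotate (m+2) ∈ H) (h2 : Equiv.swap x (x + 1) ∈ H) : H = ⊤ := by
  have hc := Equiv.Perm.closure_cycle_adjacent_swap (isCycle_finRotate (n := m))
    (support_finRotate (n := m)) x
  rw [eq_top_iff, ← hc, Subgroup.closure_le]
  intro g hg
  rcases hg with rfl | hg
  · exact h1
  · simp only [Set.mem_singleton_iff] at hg
    subst hg
    rwa [finRotate_succ_apply]

lemma top_of_adj {n : ℕ} (H : Subgroup (Equiv.Perm (Fin n)))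
    (h : ∀ i : ℕ, (hi : i + 1 < n) → Equiv.swap ⟨i, by omega⟩ ⟨i+1, hi⟩ ∈ H) : H = ⊤ := by
  have key : ∀ d a : ℕ, (h2 : a + d + 1 < n) → Equiv.swap ⟨a, by omega⟩ ⟨a + d + 1, h2⟩ ∈ H := by
    intro d
    induction d with
    | zero => intro a h2; exact h a h2
    | succ e ih =>
      intro a h2
      have hadj : Equiv.swap (⟨a + e + 1, by omega⟩ : Fin n) ⟨a + e + 2, by omega⟩ ∈ H := h _ (by omega)
      have hsml : Equiv.swap (⟨a, by omega⟩ : Fin n) ⟨a + e + 1, by omega⟩ ∈ H := ih a (by omega)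
      have heq : Equiv.swap (⟨a, by omega⟩ : Fin n) ⟨a + (e+1) + 1, h2⟩
          = Equiv.swap (⟨a + e + 1, by omega⟩ : Fin n) ⟨a + e + 2, by omega⟩
            * Equiv.swap (⟨a, by omega⟩ : Fin n) ⟨a + e + 1, by omega⟩
            * (Equiv.swap (⟨a + e + 1, by omega⟩ : Fin n) ⟨a + e + 2, by omega⟩)⁻¹ := by
        rw [← Equiv.swap_apply_apply]
        congr 1
        · rw [Equiv.swap_apply_of_ne_of_ne] <;> (intro hh; rw [Fin.ext_iff] at hh; simp at hh; omega)
        · rw [Equiv.swap_apply_left]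
          exact Fin.ext (by simp; omega)
      rw [heq]
      exact mul_mem (mul_mem hadj hsml) (inv_mem hadj)
  rw [eq_top_iff, ← Equiv.Perm.closure_isSwap, Subgroup.closure_le]
  rintro g ⟨x, y, hxy, rfl⟩
  rcases Nat.lt_or_ge (x : ℕ) (y : ℕ) with hlt | hge
  · have := key ((y:ℕ) - (x:ℕ) - 1) (x:ℕ) (by omega : (x:ℕ) + ((y:ℕ) - (x:ℕ) - 1) + 1 < n)
    have e1 : (⟨(x:ℕ), by omega⟩ : Fin n) = x := Fin.ext rfl
    have e2 : (⟨(x:ℕ) + ((y:ℕ) - (x:ℕ) - 1) + 1, by omega⟩ : Fin n) = y := Fin.ext (by simp; omega)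
    rwa [e1, e2] at this
  · have hlt' : (y:ℕ) < (x:ℕ) := by
      rcases Nat.lt_or_ge (y:ℕ) (x:ℕ) with h' | h'
      · exact h'
      · exact absurd (Fin.ext (le_antisymm h' hge)) hxy
    have := key ((x:ℕ) - (y:ℕ) - 1) (y:ℕ) (by omega : (y:ℕ) + ((x:ℕ) - (y:ℕ) - 1) + 1 < n)
    have e1 : (⟨(y:ℕ), by omega⟩ : Fin n) = y := Fin.ext rfl
    have e2 : (⟨(y:ℕ) + ((x:ℕ) - (y:ℕ) - 1) + 1, by omega⟩ : Fin n) = x := Fin.ext (by simp; omega)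
    rw [e1, e2] at this
    rwa [Equiv.swap_comm]

-- small n
lemma avoidSet_small {n : ℕ} (hn : n < 3) (T : Set (Σ k : ℕ, Equiv.Perm (Fin k)))
    (hT : ∀ τ ∈ T, τ.1 = 3) : avoidSet n T = Set.univ := by
  ext π
  simp only [Set.mem_univ, iff_true, avoidSet, Set.mem_setOf_eq]
  intro τ hτ
  rintro ⟨f, hf, -⟩
  have h3 := hT τ hτ
  have := Fintype.card_le_of_injective f hf.injective
  rw [Fintype.card_fin, Fintype.card_fin, h3] at this
  omega

lemma fin_succ_eq {N : ℕ} {i j : Fin (N+1)} (hij : (i:ℕ) + 1 = (j:ℕ)) : i + 1 = j := by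
  have hi : i < Fin.last N := by
    rw [Fin.lt_def]
    have := j.isLt
    simp only [Fin.val_last]
    omega
  rw [Fin.ext_iff, Fin.val_add_one_of_lt hi]
  exact hij

lemma top_of_rot_swap' {m : ℕ} (H : Subgroup (Equiv.Perm (Fin (m+2)))) (x y : Fin (m+2))
    (hxy : x + 1 = y) (h1 : finRotate (m+2) ∈ H) (h2 : Equiv.swap x y ∈ H) : H = ⊤ :=
  top_of_rot_swap H x h1 (hxy ▸ h2)


def img3 (S : Finset (Equiv.Perm (Fin 3))) : Set (Σ k : ℕ, Equiv.Perm (Fin k)) :=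
  (fun τ => (⟨3, τ⟩ : Σ k : ℕ, Equiv.Perm (Fin k))) '' (↑S : Set (Equiv.Perm (Fin 3)))

lemma mem_avoidSet_triple {n : ℕ} {π : Equiv.Perm (Fin n)} {a b c : Equiv.Perm (Fin 3)}
    (ha : ¬ PermContains a π) (hb : ¬ PermContains b π) (hc : ¬ PermContains c π) :
    π ∈ avoidSet n (img3 {a, b, c}) := by
  apply mem_avoidSet.mpr
  intro τ hτ
  simp only [Finset.mem_insert, Finset.mem_singleton] at hτ
  rcases hτ with rfl | rfl | rfl
  exacts [ha, hb, hc]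



lemma case_123_132_231 (m : ℕ) :
    Subgroup.closure (avoidSet (m+3) (img3 ({p123, p132, p231} : Finset (Equiv.Perm (Fin 3))))) = ⊤ := by
  set i : Fin (m+3) := ⟨m+1, by omega⟩ with hi
  set j : Fin (m+3) := ⟨m+2, by omega⟩ with hj
  have hij : (i:ℕ) + 1 = (j:ℕ) := rfl
  have hw0 : (Fin.revPerm : Equiv.Perm (Fin (m+3))) ∈ Subgroup.closure (avoidSet (m+3) (img3 ({p123, p132, p231} : Finset (Equiv.Perm (Fin 3))))) :=
    Subgroup.subset_closure (mem_avoidSet_triple (rev_avoids p123 0 1 (by decide) (by decide))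
      (rev_avoids p132 0 1 (by decide) (by decide))
      (rev_avoids p231 0 1 (by decide) (by decide)))
  have hg1 : Fin.revPerm * finRotate (m+3) ∈ Subgroup.closure (avoidSet (m+3) (img3 ({p123, p132, p231} : Finset (Equiv.Perm (Fin 3))))) :=
    Subgroup.subset_closure (mem_avoidSet_triple (avoids_mul_rev p123 p321 (by decide) _ (rot_avoids_desc01 (m := m+2) _ (by decide)))
      (avoids_mul_rev p132 p312 (by decide) _ (rot_avoids_desc01 (m := m+2) _ (by decide)))
      (avoids_mul_rev p231 p213 (by decide) _ (rot_avoids_desc01 (m := m+2) _ (by decide))))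
  have hrot : finRotate (m+3) ∈ Subgroup.closure (avoidSet (m+3) (img3 ({p123, p132, p231} : Finset (Equiv.Perm (Fin 3))))) := by
    have h2 := mul_mem hw0 hg1
    rwa [← mul_assoc, revPerm_mul_revPerm, one_mul] at h2
  have hws : Fin.revPerm * Equiv.swap i j ∈ Subgroup.closure (avoidSet (m+3) (img3 ({p123, p132, p231} : Finset (Equiv.Perm (Fin 3))))) :=
    Subgroup.subset_closure (mem_avoidSet_triple (avoids_mul_rev p123 p321 (by decide) _ (swap_avoids_321 hij))
      (avoids_mul_rev p132 p312 (by decide) _ (swap_avoids_312 hij))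
      (avoids_mul_rev p231 p213 (by decide) _ (swap_avoids_213 hij rfl)))
  have hswap : Equiv.swap i j ∈ Subgroup.closure (avoidSet (m+3) (img3 ({p123, p132, p231} : Finset (Equiv.Perm (Fin 3))))) := by
    have h2 := mul_mem hw0 hws
    rwa [← mul_assoc, revPerm_mul_revPerm, one_mul] at h2
  exact top_of_rot_swap' _ i j (fin_succ_eq hij) hrot hswap

lemma case_123_132_312 (m : ℕ) :
    Subgroup.closure (avoidSet (m+3) (img3 ({p123, p132, p312} : Finset (Equiv.Perm (Fin 3))))) = ⊤ := by
  set i : Fin (m+3) := ⟨0, by omega⟩ with hi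
  set j : Fin (m+3) := ⟨1, by omega⟩ with hj
  have hij : (i:ℕ) + 1 = (j:ℕ) := rfl
  have hw0 : (Fin.revPerm : Equiv.Perm (Fin (m+3))) ∈ Subgroup.closure (avoidSet (m+3) (img3 ({p123, p132, p312} : Finset (Equiv.Perm (Fin 3))))) :=
    Subgroup.subset_closure (mem_avoidSet_triple (rev_avoids p123 0 1 (by decide) (by decide))
      (rev_avoids p132 0 1 (by decide) (by decide))
      (rev_avoids p312 1 2 (by decide) (by decide)))
  have hg1 : Fin.revPerm * finRotate (m+3) ∈ Subgroup.closure (avoidSet (m+3) (img3 ({p123, p132, p312} : Finset (Equiv.Perm (Fin 3))))) :=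
    Subgroup.subset_closure (mem_avoidSet_triple (avoids_mul_rev p123 p321 (by decide) _ (rot_avoids_desc01 (m := m+2) _ (by decide)))
      (avoids_mul_rev p132 p312 (by decide) _ (rot_avoids_desc01 (m := m+2) _ (by decide)))
      (avoids_mul_rev p312 p132 (by decide) _ (rot_avoids_132 (m := m+2))))
  have hrot : finRotate (m+3) ∈ Subgroup.closure (avoidSet (m+3) (img3 ({p123, p132, p312} : Finset (Equiv.Perm (Fin 3))))) := by
    have h2 := mul_mem hw0 hg1
    rwa [← mul_assoc, revPerm_mul_revPerm, one_mul] at h2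
  have hws : Fin.revPerm * Equiv.swap i j ∈ Subgroup.closure (avoidSet (m+3) (img3 ({p123, p132, p312} : Finset (Equiv.Perm (Fin 3))))) :=
    Subgroup.subset_closure (mem_avoidSet_triple (avoids_mul_rev p123 p321 (by decide) _ (swap_avoids_321 hij))
      (avoids_mul_rev p132 p312 (by decide) _ (swap_avoids_312 hij))
      (avoids_mul_rev p312 p132 (by decide) _ (swap_avoids_132 hij rfl)))
  have hswap : Equiv.swap i j ∈ Subgroup.closure (avoidSet (m+3) (img3 ({p123, p132, p312} : Finset (Equiv.Perm (Fin 3))))) := by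
    have h2 := mul_mem hw0 hws
    rwa [← mul_assoc, revPerm_mul_revPerm, one_mul] at h2
  exact top_of_rot_swap' _ i j (fin_succ_eq hij) hrot hswap

lemma case_123_213_231 (m : ℕ) :
    Subgroup.closure (avoidSet (m+3) (img3 ({p123, p213, p231} : Finset (Equiv.Perm (Fin 3))))) = ⊤ := by
  set i : Fin (m+3) := ⟨m+1, by omega⟩ with hi
  set j : Fin (m+3) := ⟨m+2, by omega⟩ with hj
  have hij : (i:ℕ) + 1 = (j:ℕ) := rfl
  have hw0 : (Fin.revPerm : Equiv.Perm (Fin (m+3))) ∈ Subgroup.closure (avoidSet (m+3) (img3 ({p123, p213, p231} : Finset (Equiv.Perm (Fin 3))))) :=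
    Subgroup.subset_closure (mem_avoidSet_triple (rev_avoids p123 0 1 (by decide) (by decide))
      (rev_avoids p213 0 2 (by decide) (by decide))
      (rev_avoids p231 0 1 (by decide) (by decide)))
  have he2 : Fin.revPerm * (finRotate (m+3))⁻¹ ∈ Subgroup.closure (avoidSet (m+3) (img3 ({p123, p213, p231} : Finset (Equiv.Perm (Fin 3))))) :=
    Subgroup.subset_closure (mem_avoidSet_triple (avoids_mul_rev p123 p321 (by decide) _ (rotinv_avoids_desc12 (m := m+2) _ (by decide)))
      (avoids_mul_rev p213 p231 (by decide) _ (rotinv_avoids_desc12 (m := m+2) _ (by decide)))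
      (avoids_mul_rev p231 p213 (by decide) _ (rotinv_avoids_213 (m := m+2))))
  have hrot : finRotate (m+3) ∈ Subgroup.closure (avoidSet (m+3) (img3 ({p123, p213, p231} : Finset (Equiv.Perm (Fin 3))))) := by
    have h2 := mul_mem hw0 he2
    rw [← mul_assoc, revPerm_mul_revPerm, one_mul] at h2
    simpa using inv_mem h2
  have hws : Fin.revPerm * Equiv.swap i j ∈ Subgroup.closure (avoidSet (m+3) (img3 ({p123, p213, p231} : Finset (Equiv.Perm (Fin 3))))) :=
    Subgroup.subset_closure (mem_avoidSet_triple (avoids_mul_rev p123 p321 (by decide) _ (swap_avoids_321 hij))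
      (avoids_mul_rev p213 p231 (by decide) _ (swap_avoids_231 hij))
      (avoids_mul_rev p231 p213 (by decide) _ (swap_avoids_213 hij rfl)))
  have hswap : Equiv.swap i j ∈ Subgroup.closure (avoidSet (m+3) (img3 ({p123, p213, p231} : Finset (Equiv.Perm (Fin 3))))) := by
    have h2 := mul_mem hw0 hws
    rwa [← mul_assoc, revPerm_mul_revPerm, one_mul] at h2
  exact top_of_rot_swap' _ i j (fin_succ_eq hij) hrot hswap

lemma case_123_213_312 (m : ℕ) :
    Subgroup.closure (avoidSet (m+3) (img3 ({p123, p213, p312} : Finset (Equiv.Perm (Fin 3))))) = ⊤ := by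
  set i : Fin (m+3) := ⟨0, by omega⟩ with hi
  set j : Fin (m+3) := ⟨1, by omega⟩ with hj
  have hij : (i:ℕ) + 1 = (j:ℕ) := rfl
  have hw0 : (Fin.revPerm : Equiv.Perm (Fin (m+3))) ∈ Subgroup.closure (avoidSet (m+3) (img3 ({p123, p213, p312} : Finset (Equiv.Perm (Fin 3))))) :=
    Subgroup.subset_closure (mem_avoidSet_triple (rev_avoids p123 0 1 (by decide) (by decide))
      (rev_avoids p213 0 2 (by decide) (by decide))
      (rev_avoids p312 1 2 (by decide) (by decide)))
  have he2 : Fin.revPerm * (finRotate (m+3))⁻¹ ∈ Subgroup.closure (avoidSet (m+3) (img3 ({p123, p213, p312} : Finset (Equiv.Perm (Fin 3))))) :=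
    Subgroup.subset_closure (mem_avoidSet_triple (avoids_mul_rev p123 p321 (by decide) _ (rotinv_avoids_desc12 (m := m+2) _ (by decide)))
      (avoids_mul_rev p213 p231 (by decide) _ (rotinv_avoids_desc12 (m := m+2) _ (by decide)))
      (avoids_mul_rev p312 p132 (by decide) _ (rotinv_avoids_desc12 (m := m+2) _ (by decide))))
  have hrot : finRotate (m+3) ∈ Subgroup.closure (avoidSet (m+3) (img3 ({p123, p213, p312} : Finset (Equiv.Perm (Fin 3))))) := by
    have h2 := mul_mem hw0 he2
    rw [← mul_assoc, revPerm_mul_revPerm, one_mul] at h2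
    simpa using inv_mem h2
  have hws : Fin.revPerm * Equiv.swap i j ∈ Subgroup.closure (avoidSet (m+3) (img3 ({p123, p213, p312} : Finset (Equiv.Perm (Fin 3))))) :=
    Subgroup.subset_closure (mem_avoidSet_triple (avoids_mul_rev p123 p321 (by decide) _ (swap_avoids_321 hij))
      (avoids_mul_rev p213 p231 (by decide) _ (swap_avoids_231 hij))
      (avoids_mul_rev p312 p132 (by decide) _ (swap_avoids_132 hij rfl)))
  have hswap : Equiv.swap i j ∈ Subgroup.closure (avoidSet (m+3) (img3 ({p123, p213, p312} : Finset (Equiv.Perm (Fin 3))))) := by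
    have h2 := mul_mem hw0 hws
    rwa [← mul_assoc, revPerm_mul_revPerm, one_mul] at h2
  exact top_of_rot_swap' _ i j (fin_succ_eq hij) hrot hswap

lemma case_132_213_231 (m : ℕ) :
    Subgroup.closure (avoidSet (m+3) (img3 ({p132, p213, p231} : Finset (Equiv.Perm (Fin 3))))) = ⊤ := by
  set i : Fin (m+3) := ⟨m+1, by omega⟩ with hi
  set j : Fin (m+3) := ⟨m+2, by omega⟩ with hj
  have hij : (i:ℕ) + 1 = (j:ℕ) := rfl
  have hw0 : (Fin.revPerm : Equiv.Perm (Fin (m+3))) ∈ Subgroup.closure (avoidSet (m+3) (img3 ({p132, p213, p231} : Finset (Equiv.Perm (Fin 3))))) :=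
    Subgroup.subset_closure (mem_avoidSet_triple (rev_avoids p132 0 1 (by decide) (by decide))
      (rev_avoids p213 0 2 (by decide) (by decide))
      (rev_avoids p231 0 1 (by decide) (by decide)))
  have hrot : finRotate (m+3) ∈ Subgroup.closure (avoidSet (m+3) (img3 ({p132, p213, p231} : Finset (Equiv.Perm (Fin 3))))) := by
    simpa using inv_mem (Subgroup.subset_closure (mem_avoidSet_triple (rotinv_avoids_desc12 (m := m+2) _ (by decide))
      (rotinv_avoids_213 (m := m+2))
      (rotinv_avoids_desc12 (m := m+2) _ (by decide))))
  have hws : Fin.revPerm * Equiv.swap i j ∈ Subgroup.closure (avoidSet (m+3) (img3 ({p132, p213, p231} : Finset (Equiv.Perm (Fin 3))))) :=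
    Subgroup.subset_closure (mem_avoidSet_triple (avoids_mul_rev p132 p312 (by decide) _ (swap_avoids_312 hij))
      (avoids_mul_rev p213 p231 (by decide) _ (swap_avoids_231 hij))
      (avoids_mul_rev p231 p213 (by decide) _ (swap_avoids_213 hij rfl)))
  have hswap : Equiv.swap i j ∈ Subgroup.closure (avoidSet (m+3) (img3 ({p132, p213, p231} : Finset (Equiv.Perm (Fin 3))))) := by
    have h2 := mul_mem hw0 hws
    rwa [← mul_assoc, revPerm_mul_revPerm, one_mul] at h2
  exact top_of_rot_swap' _ i j (fin_succ_eq hij) hrot hswap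

lemma case_132_213_312 (m : ℕ) :
    Subgroup.closure (avoidSet (m+3) (img3 ({p132, p213, p312} : Finset (Equiv.Perm (Fin 3))))) = ⊤ := by
  set i : Fin (m+3) := ⟨0, by omega⟩ with hi
  set j : Fin (m+3) := ⟨1, by omega⟩ with hj
  have hij : (i:ℕ) + 1 = (j:ℕ) := rfl
  have hw0 : (Fin.revPerm : Equiv.Perm (Fin (m+3))) ∈ Subgroup.closure (avoidSet (m+3) (img3 ({p132, p213, p312} : Finset (Equiv.Perm (Fin 3))))) :=
    Subgroup.subset_closure (mem_avoidSet_triple (rev_avoids p132 0 1 (by decide) (by decide))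
      (rev_avoids p213 0 2 (by decide) (by decide))
      (rev_avoids p312 1 2 (by decide) (by decide)))
  have hrot : finRotate (m+3) ∈ Subgroup.closure (avoidSet (m+3) (img3 ({p132, p213, p312} : Finset (Equiv.Perm (Fin 3))))) :=
    Subgroup.subset_closure (mem_avoidSet_triple (rot_avoids_132 (m := m+2))
      (rot_avoids_desc01 (m := m+2) _ (by decide))
      (rot_avoids_desc01 (m := m+2) _ (by decide)))
  have hws : Fin.revPerm * Equiv.swap i j ∈ Subgroup.closure (avoidSet (m+3) (img3 ({p132, p213, p312} : Finset (Equiv.Perm (Fin 3))))) :=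
    Subgroup.subset_closure (mem_avoidSet_triple (avoids_mul_rev p132 p312 (by decide) _ (swap_avoids_312 hij))
      (avoids_mul_rev p213 p231 (by decide) _ (swap_avoids_231 hij))
      (avoids_mul_rev p312 p132 (by decide) _ (swap_avoids_132 hij rfl)))
  have hswap : Equiv.swap i j ∈ Subgroup.closure (avoidSet (m+3) (img3 ({p132, p213, p312} : Finset (Equiv.Perm (Fin 3))))) := by
    have h2 := mul_mem hw0 hws
    rwa [← mul_assoc, revPerm_mul_revPerm, one_mul] at h2
  exact top_of_rot_swap' _ i j (fin_succ_eq hij) hrot hswap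

lemma case_132_231_312 (m : ℕ) :
    Subgroup.closure (avoidSet (m+3) (img3 ({p132, p231, p312} : Finset (Equiv.Perm (Fin 3))))) = ⊤ := by
  set i : Fin (m+3) := ⟨0, by omega⟩ with hi
  set j : Fin (m+3) := ⟨1, by omega⟩ with hj
  have hij : (i:ℕ) + 1 = (j:ℕ) := rfl
  have hw0 : (Fin.revPerm : Equiv.Perm (Fin (m+3))) ∈ Subgroup.closure (avoidSet (m+3) (img3 ({p132, p231, p312} : Finset (Equiv.Perm (Fin 3))))) :=
    Subgroup.subset_closure (mem_avoidSet_triple (rev_avoids p132 0 1 (by decide) (by decide))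
      (rev_avoids p231 0 1 (by decide) (by decide))
      (rev_avoids p312 1 2 (by decide) (by decide)))
  have hg1 : Fin.revPerm * finRotate (m+3) ∈ Subgroup.closure (avoidSet (m+3) (img3 ({p132, p231, p312} : Finset (Equiv.Perm (Fin 3))))) :=
    Subgroup.subset_closure (mem_avoidSet_triple (avoids_mul_rev p132 p312 (by decide) _ (rot_avoids_desc01 (m := m+2) _ (by decide)))
      (avoids_mul_rev p231 p213 (by decide) _ (rot_avoids_desc01 (m := m+2) _ (by decide)))
      (avoids_mul_rev p312 p132 (by decide) _ (rot_avoids_132 (m := m+2))))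
  have hrot : finRotate (m+3) ∈ Subgroup.closure (avoidSet (m+3) (img3 ({p132, p231, p312} : Finset (Equiv.Perm (Fin 3))))) := by
    have h2 := mul_mem hw0 hg1
    rwa [← mul_assoc, revPerm_mul_revPerm, one_mul] at h2
  have hswap : Equiv.swap i j ∈ Subgroup.closure (avoidSet (m+3) (img3 ({p132, p231, p312} : Finset (Equiv.Perm (Fin 3))))) :=
    Subgroup.subset_closure (mem_avoidSet_triple (swap_avoids_132 hij rfl)
      (swap_avoids_231 hij)
      (swap_avoids_312 hij))
  exact top_of_rot_swap' _ i j (fin_succ_eq hij) hrot hswap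

lemma case_132_231_321 (m : ℕ) :
    Subgroup.closure (avoidSet (m+3) (img3 ({p132, p231, p321} : Finset (Equiv.Perm (Fin 3))))) = ⊤ := by
  set i : Fin (m+3) := ⟨0, by omega⟩ with hi
  set j : Fin (m+3) := ⟨1, by omega⟩ with hj
  have hij : (i:ℕ) + 1 = (j:ℕ) := rfl
  have hrot : finRotate (m+3) ∈ Subgroup.closure (avoidSet (m+3) (img3 ({p132, p231, p321} : Finset (Equiv.Perm (Fin 3))))) := by
    simpa using inv_mem (Subgroup.subset_closure (mem_avoidSet_triple (rotinv_avoids_desc12 (m := m+2) _ (by decide))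
      (rotinv_avoids_desc12 (m := m+2) _ (by decide))
      (rotinv_avoids_desc12 (m := m+2) _ (by decide))))
  have hswap : Equiv.swap i j ∈ Subgroup.closure (avoidSet (m+3) (img3 ({p132, p231, p321} : Finset (Equiv.Perm (Fin 3))))) :=
    Subgroup.subset_closure (mem_avoidSet_triple (swap_avoids_132 hij rfl)
      (swap_avoids_231 hij)
      (swap_avoids_321 hij))
  exact top_of_rot_swap' _ i j (fin_succ_eq hij) hrot hswap

lemma case_132_312_321 (m : ℕ) :
    Subgroup.closure (avoidSet (m+3) (img3 ({p132, p312, p321} : Finset (Equiv.Perm (Fin 3))))) = ⊤ := by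
  set i : Fin (m+3) := ⟨0, by omega⟩ with hi
  set j : Fin (m+3) := ⟨1, by omega⟩ with hj
  have hij : (i:ℕ) + 1 = (j:ℕ) := rfl
  have hrot : finRotate (m+3) ∈ Subgroup.closure (avoidSet (m+3) (img3 ({p132, p312, p321} : Finset (Equiv.Perm (Fin 3))))) :=
    Subgroup.subset_closure (mem_avoidSet_triple (rot_avoids_132 (m := m+2))
      (rot_avoids_desc01 (m := m+2) _ (by decide))
      (rot_avoids_desc01 (m := m+2) _ (by decide)))
  have hswap : Equiv.swap i j ∈ Subgroup.closure (avoidSet (m+3) (img3 ({p132, p312, p321} : Finset (Equiv.Perm (Fin 3))))) :=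
    Subgroup.subset_closure (mem_avoidSet_triple (swap_avoids_132 hij rfl)
      (swap_avoids_312 hij)
      (swap_avoids_321 hij))
  exact top_of_rot_swap' _ i j (fin_succ_eq hij) hrot hswap

lemma case_213_231_312 (m : ℕ) :
    Subgroup.closure (avoidSet (m+3) (img3 ({p213, p231, p312} : Finset (Equiv.Perm (Fin 3))))) = ⊤ := by
  set i : Fin (m+3) := ⟨m+1, by omega⟩ with hi
  set j : Fin (m+3) := ⟨m+2, by omega⟩ with hj
  have hij : (i:ℕ) + 1 = (j:ℕ) := rfl
  have hw0 : (Fin.revPerm : Equiv.Perm (Fin (m+3))) ∈ Subgroup.closure (avoidSet (m+3) (img3 ({p213, p231, p312} : Finset (Equiv.Perm (Fin 3))))) :=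
    Subgroup.subset_closure (mem_avoidSet_triple (rev_avoids p213 0 2 (by decide) (by decide))
      (rev_avoids p231 0 1 (by decide) (by decide))
      (rev_avoids p312 1 2 (by decide) (by decide)))
  have he2 : Fin.revPerm * (finRotate (m+3))⁻¹ ∈ Subgroup.closure (avoidSet (m+3) (img3 ({p213, p231, p312} : Finset (Equiv.Perm (Fin 3))))) :=
    Subgroup.subset_closure (mem_avoidSet_triple (avoids_mul_rev p213 p231 (by decide) _ (rotinv_avoids_desc12 (m := m+2) _ (by decide)))
      (avoids_mul_rev p231 p213 (by decide) _ (rotinv_avoids_213 (m := m+2)))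
      (avoids_mul_rev p312 p132 (by decide) _ (rotinv_avoids_desc12 (m := m+2) _ (by decide))))
  have hrot : finRotate (m+3) ∈ Subgroup.closure (avoidSet (m+3) (img3 ({p213, p231, p312} : Finset (Equiv.Perm (Fin 3))))) := by
    have h2 := mul_mem hw0 he2
    rw [← mul_assoc, revPerm_mul_revPerm, one_mul] at h2
    simpa using inv_mem h2
  have hswap : Equiv.swap i j ∈ Subgroup.closure (avoidSet (m+3) (img3 ({p213, p231, p312} : Finset (Equiv.Perm (Fin 3))))) :=
    Subgroup.subset_closure (mem_avoidSet_triple (swap_avoids_213 hij rfl)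
      (swap_avoids_231 hij)
      (swap_avoids_312 hij))
  exact top_of_rot_swap' _ i j (fin_succ_eq hij) hrot hswap

lemma case_213_231_321 (m : ℕ) :
    Subgroup.closure (avoidSet (m+3) (img3 ({p213, p231, p321} : Finset (Equiv.Perm (Fin 3))))) = ⊤ := by
  set i : Fin (m+3) := ⟨m+1, by omega⟩ with hi
  set j : Fin (m+3) := ⟨m+2, by omega⟩ with hj
  have hij : (i:ℕ) + 1 = (j:ℕ) := rfl
  have hrot : finRotate (m+3) ∈ Subgroup.closure (avoidSet (m+3) (img3 ({p213, p231, p321} : Finset (Equiv.Perm (Fin 3))))) := by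
    simpa using inv_mem (Subgroup.subset_closure (mem_avoidSet_triple (rotinv_avoids_213 (m := m+2))
      (rotinv_avoids_desc12 (m := m+2) _ (by decide))
      (rotinv_avoids_desc12 (m := m+2) _ (by decide))))
  have hswap : Equiv.swap i j ∈ Subgroup.closure (avoidSet (m+3) (img3 ({p213, p231, p321} : Finset (Equiv.Perm (Fin 3))))) :=
    Subgroup.subset_closure (mem_avoidSet_triple (swap_avoids_213 hij rfl)
      (swap_avoids_231 hij)
      (swap_avoids_321 hij))
  exact top_of_rot_swap' _ i j (fin_succ_eq hij) hrot hswap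

lemma case_213_312_321 (m : ℕ) :
    Subgroup.closure (avoidSet (m+3) (img3 ({p213, p312, p321} : Finset (Equiv.Perm (Fin 3))))) = ⊤ := by
  set i : Fin (m+3) := ⟨m+1, by omega⟩ with hi
  set j : Fin (m+3) := ⟨m+2, by omega⟩ with hj
  have hij : (i:ℕ) + 1 = (j:ℕ) := rfl
  have hrot : finRotate (m+3) ∈ Subgroup.closure (avoidSet (m+3) (img3 ({p213, p312, p321} : Finset (Equiv.Perm (Fin 3))))) :=
    Subgroup.subset_closure (mem_avoidSet_triple (rot_avoids_desc01 (m := m+2) _ (by decide))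
      (rot_avoids_desc01 (m := m+2) _ (by decide))
      (rot_avoids_desc01 (m := m+2) _ (by decide)))
  have hswap : Equiv.swap i j ∈ Subgroup.closure (avoidSet (m+3) (img3 ({p213, p312, p321} : Finset (Equiv.Perm (Fin 3))))) :=
    Subgroup.subset_closure (mem_avoidSet_triple (swap_avoids_213 hij rfl)
      (swap_avoids_312 hij)
      (swap_avoids_321 hij))
  exact top_of_rot_swap' _ i j (fin_succ_eq hij) hrot hswap

lemma case_231_312_321 (m : ℕ) :
    Subgroup.closure (avoidSet (m+3) (img3 ({p231, p312, p321} : Finset (Equiv.Perm (Fin 3))))) = ⊤ := by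
  apply top_of_adj
  intro a ha
  exact Subgroup.subset_closure (mem_avoidSet_triple
    (swap_avoids_231 (i := ⟨a, by omega⟩) (j := ⟨a+1, ha⟩) rfl)
    (swap_avoids_312 rfl) (swap_avoids_321 rfl))

lemma case_123_132_213 (m : ℕ) :
    Subgroup.closure (avoidSet (m+3) (img3 ({p123, p132, p213} : Finset (Equiv.Perm (Fin 3))))) = ⊤ := by
  have hw0 : (Fin.revPerm : Equiv.Perm (Fin (m+3))) ∈
      Subgroup.closure (avoidSet (m+3) (img3 ({p123, p132, p213} : Finset (Equiv.Perm (Fin 3))))) :=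
    Subgroup.subset_closure (mem_avoidSet_triple
      (rev_avoids p123 0 1 (by decide) (by decide))
      (rev_avoids p132 0 1 (by decide) (by decide))
      (rev_avoids p213 0 2 (by decide) (by decide)))
  apply top_of_adj
  intro a ha
  have hws : Fin.revPerm * Equiv.swap ⟨a, by omega⟩ ⟨a+1, ha⟩ ∈
      Subgroup.closure (avoidSet (m+3) (img3 ({p123, p132, p213} : Finset (Equiv.Perm (Fin 3))))) :=
    Subgroup.subset_closure (mem_avoidSet_triple
      (avoids_mul_rev p123 p321 (by decide) _
        (swap_avoids_321 (i := ⟨a, by omega⟩) (j := ⟨a+1, ha⟩) rfl))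
      (avoids_mul_rev p132 p312 (by decide) _ (swap_avoids_312 rfl))
      (avoids_mul_rev p213 p231 (by decide) _ (swap_avoids_231 rfl)))
  have h2 := mul_mem hw0 hws
  rwa [← mul_assoc, revPerm_mul_revPerm, one_mul] at h2


set_option synthInstance.maxSize 5000 in
set_option synthInstance.maxHeartbeats 2000000 in
set_option maxRecDepth 40000 in
lemma perm3_dispatch : ∀ a b c : Equiv.Perm (Fin 3), a ≠ b → a ≠ c → b ≠ c →
    ¬(({p123, p321} : Finset (Equiv.Perm (Fin 3))) ⊆ {a, b, c}) →
    ({a,b,c} : Finset (Equiv.Perm (Fin 3))) ≠ {p132, p213, p321} →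
    ({a,b,c} : Finset (Equiv.Perm (Fin 3))) ≠ {p123, p231, p312} →
    (({a,b,c} : Finset (Equiv.Perm (Fin 3))) = {p231,p312,p321} ∨
     ({a,b,c} : Finset (Equiv.Perm (Fin 3))) = {p123,p132,p213} ∨
     ({a,b,c} : Finset (Equiv.Perm (Fin 3))) = {p123,p132,p231} ∨
     ({a,b,c} : Finset (Equiv.Perm (Fin 3))) = {p123,p132,p312} ∨
     ({a,b,c} : Finset (Equiv.Perm (Fin 3))) = {p123,p213,p231} ∨
     ({a,b,c} : Finset (Equiv.Perm (Fin 3))) = {p123,p213,p312} ∨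
     ({a,b,c} : Finset (Equiv.Perm (Fin 3))) = {p132,p213,p231} ∨
     ({a,b,c} : Finset (Equiv.Perm (Fin 3))) = {p132,p213,p312} ∨
     ({a,b,c} : Finset (Equiv.Perm (Fin 3))) = {p132,p231,p312} ∨
     ({a,b,c} : Finset (Equiv.Perm (Fin 3))) = {p132,p231,p321} ∨
     ({a,b,c} : Finset (Equiv.Perm (Fin 3))) = {p132,p312,p321} ∨
     ({a,b,c} : Finset (Equiv.Perm (Fin 3))) = {p213,p231,p312} ∨
     ({a,b,c} : Finset (Equiv.Perm (Fin 3))) = {p213,p231,p321} ∨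
     ({a,b,c} : Finset (Equiv.Perm (Fin 3))) = {p213,p312,p321}) := by decide

theorem closure_avoid_three_patterns_of_S3 (T : Finset (Equiv.Perm (Fin 3)))
    (hcard : T.card = 3)
    (h1 : ¬ ({p123, p321} : Finset (Equiv.Perm (Fin 3))) ⊆ T)
    (h2 : T ≠ ({p132, p213, p321} : Finset (Equiv.Perm (Fin 3))))
    (h3 : T ≠ ({p123, p231, p312} : Finset (Equiv.Perm (Fin 3)))) (n : ℕ) :
    Subgroup.closure (avoidSet n
      ((fun τ => (⟨3, τ⟩ : Σ k : ℕ, Equiv.Perm (Fin k))) '' (↑T : Set (Equiv.Perm (Fin 3))))) =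
      ⊤ := by
  have hT3 : ∀ τ ∈ ((fun τ => (⟨3, τ⟩ : Σ k : ℕ, Equiv.Perm (Fin k))) ''
      (↑T : Set (Equiv.Perm (Fin 3)))), τ.1 = 3 := by
    rintro τ ⟨σ, hσ, rfl⟩
    rfl
  rcases n with _ | (_ | (_ | m))
  · rw [avoidSet_small (by omega) _ hT3, Subgroup.closure_univ]
  · rw [avoidSet_small (by omega) _ hT3, Subgroup.closure_univ]
  · rw [avoidSet_small (by omega) _ hT3, Subgroup.closure_univ]
  · obtain ⟨a, b, c, hab, hac, hbc, rfl⟩ := Finset.card_eq_three.mp hcard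
    have key := perm3_dispatch a b c hab hac hbc h1 h2 h3
    rcases key with h|h|h|h|h|h|h|h|h|h|h|h|h|h
    · rw [h]
      exact case_231_312_321 m
    · rw [h]
      exact case_123_132_213 m
    · rw [h]
      exact case_123_132_231 m
    · rw [h]
      exact case_123_132_312 m
    · rw [h]
      exact case_123_213_231 m
    · rw [h]
      exact case_123_213_312 m
    · rw [h]
      exact case_132_213_231 m
    · rw [h]
      exact case_132_213_312 m
    · rw [h]
      exact case_132_231_312 m
    · rw [h]
      exact case_132_231_321 m
    · rw [h]
      exact case_132_312_321 m
    · rw [h]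
      exact case_213_231_312 m
    · rw [h]
      exact case_213_231_321 m
    · rw [h]
      exact case_213_312_321 m
end
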